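/- For each m ∈ {2, 3, −6}, there exists a ℚ-algebra homomorphism from the field ℚ[X]/(X² − m) (Mathlib's AdjoinRoot of the polynomial X² − m over ℚ) into the quaternion algebra ℍ[ℚ, −6, 2]; equivalently, there exists an element x of ℍ[ℚ, −6, 2] with x² = m and x not in the image of the structure map from ℚ. -/

import Mathlib

open Quaternion Polynomial

private lemma build (m : ℚ) (x : ℍ[ℚ, -6, 2]) (hx : x ^ 2 = algebraMap ℚ ℍ[ℚ, -6, 2] m)
    (hx2 : x ∉ Set.range (algebraMap ℚ ℍ[ℚ, -6, 2])) :
    Nonempty (AdjoinRoot (X ^ 2 - C m) →ₐ[ℚ] ℍ[ℚ, -6, 2]) ∧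
      ∃ x : ℍ[ℚ, -6, 2], x ^ 2 = algebraMap ℚ ℍ[ℚ, -6, 2] m ∧
        x ∉ Set.range (algebraMap ℚ ℍ[ℚ, -6, 2]) := by
  refine ⟨?_, x, hx, hx2⟩
  let S := Algebra.adjoin ℚ ({x} : Set ℍ[ℚ, -6, 2])
  letI : CommRing S := Algebra.adjoinCommRingOfComm ℚ (by
    intro a ha b hb
    rw [Set.mem_singleton_iff] at ha hb
    subst ha; subst hb; rfl)
  have hmem : x ∈ S := Algebra.self_mem_adjoin_singleton ℚ x
  have hroot : aeval (⟨x, hmem⟩ : S) (X ^ 2 - C m) = 0 := by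
    apply Subtype.ext
    push_cast [map_sub, map_pow, aeval_X, aeval_C]
    show x ^ 2 - algebraMap ℚ ℍ[ℚ, -6, 2] m = 0
    rw [hx, sub_self]
  exact ⟨S.val.comp (AdjoinRoot.liftAlgHom _ (Algebra.ofId ℚ S) ⟨x, hmem⟩ hroot)⟩

/-- For each `m ∈ {2, 3, −6}`, the quadratic field `ℚ[X]/(X² − m)` embeds into
the quaternion algebra `(−6, 2 / ℚ)`; equivalently, `ℍ[ℚ, -6, 2]` contains an
element `x` with `x² = m` which is not a scalar. -/
theorem stmt_9 : ∀ m ∈ ({2, 3, -6} : Set ℚ),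
    Nonempty (AdjoinRoot (X ^ 2 - C m) →ₐ[ℚ] ℍ[ℚ, -6, 2]) ∧
      ∃ x : ℍ[ℚ, -6, 2], x ^ 2 = algebraMap ℚ ℍ[ℚ, -6, 2] m ∧
        x ∉ Set.range (algebraMap ℚ ℍ[ℚ, -6, 2]) := by
  rintro m (rfl | rfl | rfl)
  · refine build 2 ⟨0, 0, 1, 0⟩ ?_ ?_
    · ext <;> simp [pow_two, QuaternionAlgebra.coe_algebraMap, QuaternionAlgebra.re_ofNat, QuaternionAlgebra.imI_ofNat, QuaternionAlgebra.imJ_ofNat, QuaternionAlgebra.imK_ofNat] <;> norm_num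
    · rintro ⟨q, hq⟩
      have := congrArg QuaternionAlgebra.imJ hq
      simp at this
  · refine build 3 ⟨0, 0, 0, 1/2⟩ ?_ ?_
    · ext <;> simp [pow_two, QuaternionAlgebra.coe_algebraMap, QuaternionAlgebra.re_ofNat, QuaternionAlgebra.imI_ofNat, QuaternionAlgebra.imJ_ofNat, QuaternionAlgebra.imK_ofNat] <;> norm_num
    · rintro ⟨q, hq⟩
      have := congrArg QuaternionAlgebra.imK hq
      simp at this
  · refine build (-6) ⟨0, 1, 0, 0⟩ ?_ ?_
    · ext <;> simp [pow_two, QuaternionAlgebra.coe_algebraMap, QuaternionAlgebra.re_ofNat, QuaternionAlgebra.imI_ofNat, QuaternionAlgebra.imJ_ofNat, QuaternionAlgebra.imK_ofNat] <;> norm_num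
    · rintro ⟨q, hq⟩
      have := congrArg QuaternionAlgebra.imI hq
      simp at this
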